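/- Let G=(V,E) be a finite DAG with m roots. Then G admits at least one irreversible pebbling strategy and at least one spooky pebbling strategy, and the minimum pebbling cost C_spooky over all spooky pebbling strategies on G and the minimum pebbling cost C_irr over all irreversible pebbling strategies on G satisfy C_irr ≤ C_spooky ≤ C_irr + m. -/

import Mathlib

variable {V : Type*}

/-- The set of roots (vertices with out-degree 0) of the graph with edge relation `E`. -/
noncomputable def rootFinset [Finite V] (E : V → V → Prop) : Finset V :=
  (Set.toFinite {v | ∀ w, ¬ E v w}).toFinset

/-- One move of the irreversible pebble game: pebble a vertex whose direct
predecessors are all pebbled, or unpebble any vertex. -/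
def IrrevStep [DecidableEq V] (E : V → V → Prop) (A B : Finset V) : Prop :=
  ∃ v : V, (B = insert v A ∧ ∀ w, E w v → w ∈ A) ∨ B = A.erase v

/-- An irreversible pebbling strategy with pebbling time `T`. -/
def IsIrrevStrategy [Finite V] [DecidableEq V] (E : V → V → Prop)
    (P : ℕ → Finset V) (T : ℕ) : Prop :=
  P 0 = ∅ ∧ P T = rootFinset E ∧
    ∀ t, 1 ≤ t → t ≤ T → IrrevStep E (P (t - 1)) (P t)

/-- One move of the spooky pebble game: pebble, unpebble, ghost or unghost. -/
def SpookyStep [DecidableEq V] (E : V → V → Prop) (A B SA SB : Finset V) : Prop :=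
  ∃ v : V,
    (B = insert v A ∧ SB = SA ∧ ∀ w, E w v → w ∈ A) ∨
    (B = A.erase v ∧ SB = SA ∧ ∀ w, E w v → w ∈ A) ∨
    (B = A.erase v ∧ SB = insert v SA) ∨
    (B = insert v A ∧ SB = SA.erase v ∧ ∀ w, E w v → w ∈ A)

/-- A spooky pebbling sub-strategy: the move rules hold, with no boundary conditions. -/
def IsSpookySubStrategy [DecidableEq V] (E : V → V → Prop)
    (P S : ℕ → Finset V) (T : ℕ) : Prop :=
  ∀ t, 1 ≤ t → t ≤ T → SpookyStep E (P (t - 1)) (P t) (S (t - 1)) (S t)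

/-- A spooky pebbling strategy with pebbling time `T`. -/
def IsSpookyStrategy [Finite V] [DecidableEq V] (E : V → V → Prop)
    (P S : ℕ → Finset V) (T : ℕ) : Prop :=
  P 0 = ∅ ∧ S 0 = ∅ ∧ P T = rootFinset E ∧ S T = ∅ ∧
    IsSpookySubStrategy E P S T

/-- The pebbling cost of a strategy of time `T`: the maximal number of pebbles used. -/
def pebCost (P : ℕ → Finset V) (T : ℕ) : ℕ :=
  (Finset.range (T + 1)).sup fun t => (P t).card

/-- The ghosting cost of a spooky strategy of time `T`: the maximal number of ghosts used. -/
def ghostCost (S : ℕ → Finset V) (T : ℕ) : ℕ :=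
  (Finset.range (T + 1)).sup fun t => (S t).card

/-- Acyclicity of the edge relation: no directed cycles. -/
def Acyclic (E : V → V → Prop) : Prop := ∀ v, ¬ Relation.TransGen E v v

/-- The grid DAG `G◇_P` on vertex set `Fin P × Fin P` (0-indexed, so the leaf “(1,1)”
is `(0,0)` and the root “(P,P)” is `(P-1,P-1)`), with edges `(i,j)→(i+1,j)` and
`(i,j)→(i,j+1)`. -/
def gridE (P : ℕ) (a b : Fin P × Fin P) : Prop :=
  ((b.1 : ℕ) = (a.1 : ℕ) + 1 ∧ b.2 = a.2) ∨
  (b.1 = a.1 ∧ (b.2 : ℕ) = (a.2 : ℕ) + 1)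

set_option linter.unusedSectionVars false

/-! ### Auxiliary machinery for the proof -/

section RSeqAux

def RSeq {α : Type*} (r : α → α → Prop) (a b : α) : Prop :=
  ∃ f : ℕ → α, ∃ T : ℕ, f 0 = a ∧ f T = b ∧ ∀ t, 1 ≤ t → t ≤ T → r (f (t - 1)) (f t)

theorem RSeq.refl {α : Type*} (r : α → α → Prop) (a : α) : RSeq r a a :=
  ⟨fun _ => a, 0, rfl, rfl, fun t h1 h0 => absurd (h1.trans h0) (by omega)⟩

theorem RSeq.single {α : Type*} {r : α → α → Prop} {a b : α} (h : r a b) : RSeq r a b := by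
  refine ⟨fun t => if t = 0 then a else b, 1, by simp, by simp, ?_⟩
  intro t h1 h2
  have : t = 1 := by omega
  subst this
  simpa using h

theorem RSeq.trans {α : Type*} {r : α → α → Prop} {a b c : α}
    (h1 : RSeq r a b) (h2 : RSeq r b c) : RSeq r a c := by
  obtain ⟨f, T1, hf0, hfT, hf⟩ := h1
  obtain ⟨g, T2, hg0, hgT, hg⟩ := h2
  refine ⟨fun t => if t ≤ T1 then f t else g (t - T1), T1 + T2, by simp [hf0], ?_, ?_⟩
  · by_cases h : T1 + T2 ≤ T1
    · have hT2 : T2 = 0 := by omega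
      subst hT2
      simp [hfT, ← hg0, hgT]
    · simp only [if_neg h]
      have : T1 + T2 - T1 = T2 := by omega
      rw [this, hgT]
  · intro t ht1 ht2
    by_cases h : t ≤ T1
    · have h' : t - 1 ≤ T1 := by omega
      simp only [if_pos h, if_pos h']
      exact hf t ht1 h
    · by_cases h' : t - 1 ≤ T1
      · have e1 : t - 1 = T1 := by omega
        have e2 : t - T1 = 1 := by omega
        simp only [if_pos h', if_neg h, e1, e2, hfT, ← hg0]
        have := hg 1 le_rfl (by omega)
        simpa using this
      · simp only [if_neg h, if_neg h']
        have e : t - 1 - T1 = (t - T1) - 1 := by omega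
        rw [e]
        exact hg (t - T1) (by omega) (by omega)

theorem RSeq.mono {α : Type*} {r r' : α → α → Prop} (h : ∀ a b, r a b → r' a b)
    {a b : α} (hr : RSeq r a b) : RSeq r' a b := by
  obtain ⟨f, T, h0, hT, hs⟩ := hr
  exact ⟨f, T, h0, hT, fun t a b => h _ _ (hs t a b)⟩

end RSeqAux

section SpookyAux

variable {V : Type*} [DecidableEq V] {E : V → V → Prop} {n : ℕ}

/-- Spooky reachability with at most `n` pebbles along the way. -/
def Reach (E : V → V → Prop) (n : ℕ) (A SA B SB : Finset V) : Prop :=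
  RSeq (fun x y : Finset V × Finset V =>
    SpookyStep E x.1 y.1 x.2 y.2 ∧ x.1.card ≤ n ∧ y.1.card ≤ n) (A, SA) (B, SB)

theorem Reach.rfl (A SA : Finset V) : Reach E n A SA A SA := RSeq.refl _ _

theorem Reach.trans {A SA B SB C SC : Finset V} (h1 : Reach E n A SA B SB)
    (h2 : Reach E n B SB C SC) : Reach E n A SA C SC := RSeq.trans h1 h2

theorem Reach.mono {n' : ℕ} (h : n ≤ n') {A SA B SB : Finset V}
    (hr : Reach E n A SA B SB) : Reach E n' A SA B SB :=
  RSeq.mono (fun _ _ hab => ⟨hab.1, hab.2.1.trans h, hab.2.2.trans h⟩) hr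

theorem reach_pebble {A S : Finset V} (v : V) (hpre : ∀ w, E w v → w ∈ A)
    (h1 : A.card ≤ n) (h2 : (insert v A).card ≤ n) : Reach E n A S (insert v A) S :=
  RSeq.single ⟨⟨v, Or.inl ⟨rfl, rfl, hpre⟩⟩, h1, h2⟩

theorem reach_unpebble {A S : Finset V} (v : V) (hpre : ∀ w, E w v → w ∈ A)
    (h1 : A.card ≤ n) : Reach E n A S (A.erase v) S :=
  RSeq.single ⟨⟨v, Or.inr (Or.inl ⟨rfl, rfl, hpre⟩)⟩, h1,
    (Finset.card_le_card (Finset.erase_subset _ _)).trans h1⟩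

theorem reach_ghost {A S : Finset V} (v : V) (h1 : A.card ≤ n) :
    Reach E n A S (A.erase v) (insert v S) :=
  RSeq.single ⟨⟨v, Or.inr (Or.inr (Or.inl ⟨rfl, rfl⟩))⟩, h1,
    (Finset.card_le_card (Finset.erase_subset _ _)).trans h1⟩

theorem reach_unghost {A S : Finset V} (v : V) (hpre : ∀ w, E w v → w ∈ A)
    (h1 : A.card ≤ n) (h2 : (insert v A).card ≤ n) :
    Reach E n A S (insert v A) (S.erase v) :=
  RSeq.single ⟨⟨v, Or.inr (Or.inr (Or.inr ⟨rfl, rfl, hpre⟩))⟩, h1, h2⟩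

theorem exists_max_vertex [Finite V] (hacyc : Acyclic E) (A : Finset V) (hA : A.Nonempty) :
    ∃ v ∈ A, ∀ u ∈ A, ¬ Relation.TransGen E v u := by
  haveI : IsTrans V (fun a b => Relation.TransGen E b a) :=
    ⟨fun a b c h1 h2 => Relation.TransGen.trans h2 h1⟩
  haveI : IsIrrefl V (fun a b => Relation.TransGen E b a) := ⟨fun a h => hacyc a h⟩
  have wf : WellFounded (fun a b : V => Relation.TransGen E b a) :=
    Finite.wellFounded_of_trans_of_irrefl _
  obtain ⟨v, hv, hmin⟩ := wf.has_min (A : Set V) (by exact_mod_cast hA)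
  exact ⟨v, by exact_mod_cast hv, fun u hu h => hmin u (by exact_mod_cast hu) h⟩

theorem mem_rootFinset' [Finite V] {v : V} :
    v ∈ rootFinset E ↔ ∀ w, ¬ E v w := by
  simp [rootFinset, Set.Finite.mem_toFinset]

theorem pebbleUp [Finite V] (hacyc : Acyclic E) (hn : ∀ B : Finset V, B.card ≤ n) :
    ∀ (k : ℕ) (A : Finset V), A.card ≤ k → (∀ v ∈ A, ∀ w, E w v → w ∈ A) →
      ∀ S : Finset V, Reach E n ∅ S A S := by
  intro k
  induction k with
  | zero =>
    intro A hk _ S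
    have : A = ∅ := Finset.card_eq_zero.mp (le_antisymm hk (Nat.zero_le _))
    rw [this]
    exact Reach.rfl _ _
  | succ k ihk =>
    intro A hk hDC S
    rcases A.eq_empty_or_nonempty with rfl | h
    · exact Reach.rfl _ _
    · obtain ⟨v, hvA, hmax⟩ := exists_max_vertex hacyc A h
      have hDC' : ∀ u ∈ A.erase v, ∀ w, E w u → w ∈ A.erase v := by
        intro u hu w hw
        have huA := Finset.mem_of_mem_erase hu
        refine Finset.mem_erase.mpr ⟨?_, hDC u huA w hw⟩
        rintro rfl
        exact hmax u huA (Relation.TransGen.single hw)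
      have hcard' : (A.erase v).card ≤ k := by
        rw [Finset.card_erase_of_mem hvA]; omega
      have step : Reach E n (A.erase v) S A S := by
        have hpre : ∀ w, E w v → w ∈ A.erase v := by
          intro w hw
          refine Finset.mem_erase.mpr ⟨?_, hDC v hvA w hw⟩
          rintro rfl
          exact hacyc _ (Relation.TransGen.single hw)
        have h' := reach_pebble (E := E) (n := n) (A := A.erase v) (S := S) v hpre (hn _) (hn _)
        rwa [Finset.insert_erase hvA] at h'
      exact (ihk (A.erase v) hcard' hDC' S).trans step

theorem spookyDown [Finite V] (hacyc : Acyclic E) (hn : ∀ B : Finset V, B.card ≤ n) :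
    ∀ (k : ℕ) (B : Finset V), (B \ rootFinset E).card ≤ k → rootFinset E ⊆ B →
      (∀ u ∈ B, u ∉ rootFinset E → ∀ w, E w u → w ∈ B) →
      Reach E n B ∅ (rootFinset E) ∅ := by
  intro k
  induction k with
  | zero =>
    intro B h hsub _
    have h1 : B \ rootFinset E = ∅ := Finset.card_eq_zero.mp (le_antisymm h (Nat.zero_le _))
    have h2 : B = rootFinset E :=
      Finset.Subset.antisymm (Finset.sdiff_eq_empty_iff_subset.mp h1) hsub
    rw [h2]
    exact Reach.rfl _ _
  | succ k ihk =>
    intro B hcard hsub hinv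
    rcases (B \ rootFinset E).eq_empty_or_nonempty with h | h
    · have h2 : B = rootFinset E :=
        Finset.Subset.antisymm (Finset.sdiff_eq_empty_iff_subset.mp h) hsub
      rw [h2]
      exact Reach.rfl _ _
    · obtain ⟨v, hvD, hmax⟩ := exists_max_vertex hacyc _ h
      have hvB : v ∈ B := (Finset.mem_sdiff.mp hvD).1
      have hvR : v ∉ rootFinset E := (Finset.mem_sdiff.mp hvD).2
      have step := reach_unpebble (E := E) (n := n) (A := B) (S := (∅ : Finset V)) v
        (hinv v hvB hvR) (hn _)
      have hsub' : rootFinset E ⊆ B.erase v := fun x hx =>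
        Finset.mem_erase.mpr ⟨fun he => hvR (he ▸ hx), hsub hx⟩
      have hinv' : ∀ u ∈ B.erase v, u ∉ rootFinset E → ∀ w, E w u → w ∈ B.erase v := by
        intro u hu huR w hw
        have huB := Finset.mem_of_mem_erase hu
        refine Finset.mem_erase.mpr ⟨?_, hinv u huB huR w hw⟩
        rintro rfl
        exact hmax u (Finset.mem_sdiff.mpr ⟨huB, huR⟩) (Relation.TransGen.single hw)
      have hcard' : (B.erase v \ rootFinset E).card ≤ k := by
        have e : B.erase v \ rootFinset E = (B \ rootFinset E).erase v := by
          ext x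
          simp only [Finset.mem_erase, Finset.mem_sdiff]
          tauto
        rw [e, Finset.card_erase_of_mem hvD]
        omega
      exact step.trans (ihk (B.erase v) hcard' hsub' hinv')

theorem exists_enter {Pf : ℕ → Finset V} (h0 : Pf 0 = ∅) :
    ∀ t, ∀ v ∈ Pf t, ∃ s, 1 ≤ s ∧ s ≤ t ∧ v ∉ Pf (s - 1) ∧ v ∈ Pf s := by
  intro t
  induction t with
  | zero =>
    intro v hv
    rw [h0] at hv
    exact absurd hv (Finset.notMem_empty v)
  | succ t iht =>
    intro v hv
    by_cases h : v ∈ Pf t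
    · obtain ⟨s, h1, h2, h3, h4⟩ := iht v h
      exact ⟨s, h1, by omega, h3, h4⟩
    · exact ⟨t + 1, by omega, le_rfl, by simpa using h, hv⟩

theorem ghostAll : ∀ (D A S : Finset V), A.card ≤ n → Reach E n A S (A \ D) (S ∪ D) := by
  intro D
  induction D using Finset.induction_on with
  | empty =>
    intro A S h
    simpa using Reach.rfl (E := E) (n := n) A S
  | @insert d D hd ihD =>
    intro A S h
    have g := reach_ghost (E := E) (n := n) (A := A) (S := S) d h
    have rest := ihD (A.erase d) (insert d S)
      ((Finset.card_le_card (Finset.erase_subset _ _)).trans h)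
    have e1 : A.erase d \ D = A \ insert d D := by
      ext x
      simp only [Finset.mem_sdiff, Finset.mem_erase, Finset.mem_insert]
      tauto
    have e2 : insert d S ∪ D = S ∪ insert d D := by
      ext x
      simp only [Finset.mem_union, Finset.mem_insert]
      tauto
    rw [e1, e2] at rest
    exact g.trans rest

theorem geom3 : ∀ m : ℕ, ((Finset.range m).sum fun j => 3 ^ j) < 3 ^ m := by
  intro m
  induction m with
  | zero => simp
  | succ m ih =>
    rw [Finset.sum_range_succ, pow_succ]
    have h3 : 0 < 3 ^ m := pow_pos (by norm_num) m
    linarith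

end SpookyAux

section MainAux

variable {V : Type*} [DecidableEq V] {E : V → V → Prop}

theorem forwardSim {Pf : ℕ → Finset V} {T C : ℕ} (h0 : Pf 0 = ∅)
    (hstep : ∀ t, 1 ≤ t → t ≤ T → IrrevStep E (Pf (t - 1)) (Pf t))
    (hC : ∀ t, t ≤ T → (Pf t).card ≤ C) :
    ∀ t, t ≤ T → ∃ G : Finset V, Reach E C ∅ ∅ (Pf t) G ∧ (∀ u ∈ G, u ∉ Pf t) ∧
      ∀ u ∈ G, ∃ s, 1 ≤ s ∧ s ≤ T ∧ u ∉ Pf (s - 1) ∧ u ∈ Pf s := by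
  intro t
  induction t with
  | zero =>
    intro _
    exact ⟨∅, by rw [h0]; exact Reach.rfl _ _, by simp, by simp⟩
  | succ t iht =>
    intro ht
    obtain ⟨G, hre, hdisj, hent⟩ := iht (by omega)
    obtain ⟨v, hcase⟩ := hstep (t + 1) (by omega) ht
    rw [Nat.add_sub_cancel] at hcase
    rcases hcase with ⟨hB, hpre⟩ | hB
    · by_cases hvG : v ∈ G
      · refine ⟨G.erase v, ?_, ?_, fun u hu => hent u (Finset.mem_of_mem_erase hu)⟩
        · refine hre.trans ?_
          have h2 : (insert v (Pf t)).card ≤ C := by rw [← hB]; exact hC _ ht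
          have mv := reach_unghost (E := E) (n := C) (A := Pf t) (S := G) v hpre
            (hC t (by omega)) h2
          rwa [← hB] at mv
        · intro u hu
          obtain ⟨hune, huG⟩ := Finset.mem_erase.mp hu
          rw [hB, Finset.mem_insert]
          rintro (rfl | huPf)
          exacts [hune rfl, hdisj u huG huPf]
      · refine ⟨G, ?_, ?_, hent⟩
        · refine hre.trans ?_
          have h2 : (insert v (Pf t)).card ≤ C := by rw [← hB]; exact hC _ ht
          have mv := reach_pebble (E := E) (n := C) (A := Pf t) (S := G) v hpre
            (hC t (by omega)) h2
          rwa [← hB] at mv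
        · intro u huG
          rw [hB, Finset.mem_insert]
          rintro (rfl | huPf)
          exacts [hvG huG, hdisj u huG huPf]
    · by_cases hvP : v ∈ Pf t
      · refine ⟨insert v G, ?_, ?_, ?_⟩
        · refine hre.trans ?_
          have mv := reach_ghost (E := E) (n := C) (A := Pf t) (S := G) v (hC t (by omega))
          rwa [← hB] at mv
        · intro u hu
          rcases Finset.mem_insert.mp hu with rfl | huG
          · rw [hB]; exact Finset.notMem_erase u _
          · intro huPf
            exact hdisj u huG (Finset.mem_of_mem_erase (hB ▸ huPf))
        · intro u hu
          rcases Finset.mem_insert.mp hu with rfl | huG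
          · obtain ⟨s, h1, h2, h3, h4⟩ := exists_enter h0 t u hvP
            exact ⟨s, h1, by omega, h3, h4⟩
          · exact hent u huG
      · have e : Pf (t + 1) = Pf t := by rw [hB, Finset.erase_eq_of_notMem hvP]
        rw [e]
        exact ⟨G, hre, hdisj, hent⟩

/-- The set of times at which `u` enters the pebbled set. -/
def entSet (Pf : ℕ → Finset V) (T : ℕ) (u : V) : Set ℕ :=
  {s | 1 ≤ s ∧ s ≤ T ∧ u ∉ Pf (s - 1) ∧ u ∈ Pf s}

/-- First entering time. -/
noncomputable def tfn (Pf : ℕ → Finset V) (T : ℕ) (u : V) : ℕ :=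
  sInf (entSet Pf T u)

theorem tfn_inj {Pf : ℕ → Finset V} {T : ℕ}
    (hstep : ∀ t, 1 ≤ t → t ≤ T → IrrevStep E (Pf (t - 1)) (Pf t))
    {u1 u2 : V} (h1 : (entSet Pf T u1).Nonempty) (h2 : (entSet Pf T u2).Nonempty)
    (heq : tfn Pf T u1 = tfn Pf T u2) : u1 = u2 := by
  have m1 : tfn Pf T u1 ∈ entSet Pf T u1 := Nat.sInf_mem h1
  have m2 : tfn Pf T u2 ∈ entSet Pf T u2 := Nat.sInf_mem h2
  rw [← heq] at m2
  obtain ⟨hs1, hsT, hn1, hm1⟩ := m1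
  obtain ⟨_, _, hn2, hm2⟩ := m2
  obtain ⟨v, hcase⟩ := hstep (tfn Pf T u1) hs1 hsT
  rcases hcase with ⟨hB, _⟩ | hB
  · rcases Finset.mem_insert.mp (hB ▸ hm1) with rfl | h
    · rcases Finset.mem_insert.mp (hB ▸ hm2) with h' | h'
      · exact h'.symm
      · exact absurd h' hn2
    · exact absurd h hn1
  · exact absurd (Finset.mem_of_mem_erase (hB ▸ hm1)) hn1

theorem simH {Pf : ℕ → Finset V} {T C : ℕ} (h0 : Pf 0 = ∅)
    (hstep : ∀ t, 1 ≤ t → t ≤ T → IrrevStep E (Pf (t - 1)) (Pf t))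
    (hC : ∀ t, t ≤ T → (Pf t).card ≤ C) (H S0 : Finset V) :
    ∀ t, t ≤ T → ∃ G : Finset V,
      Reach E (C + H.card) H S0 (Pf t ∪ H) (S0 ∪ G) ∧ (∀ w ∈ G, w ∉ H) ∧
      ∀ w ∈ G, ∃ s, 1 ≤ s ∧ s ≤ t ∧ w ∉ Pf (s - 1) ∧ w ∈ Pf s := by
  have cardPH : ∀ s, s ≤ T → (Pf s ∪ H).card ≤ C + H.card := fun s hs =>
    (Finset.card_union_le _ _).trans (Nat.add_le_add_right (hC s hs) _)
  intro t
  induction t with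
  | zero =>
    intro _
    refine ⟨∅, ?_, by simp, by simp⟩
    rw [h0]
    simpa using Reach.rfl (E := E) (n := C + H.card) H S0
  | succ t iht =>
    intro ht
    obtain ⟨G, hre, hGH, hGent⟩ := iht (by omega)
    obtain ⟨v, hcase⟩ := hstep (t + 1) (by omega) ht
    rw [Nat.add_sub_cancel] at hcase
    rcases hcase with ⟨hB, hpre⟩ | hB
    · have hpre' : ∀ w, E w v → w ∈ Pf t ∪ H := fun w hw =>
        Finset.mem_union_left _ (hpre w hw)
      have e : insert v (Pf t ∪ H) = Pf (t + 1) ∪ H := by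
        rw [hB, Finset.insert_union]
      have h2 : (insert v (Pf t ∪ H)).card ≤ C + H.card := by
        rw [e]; exact cardPH (t + 1) ht
      have mv := reach_pebble (E := E) (n := C + H.card) (A := Pf t ∪ H) (S := S0 ∪ G) v
        hpre' (cardPH t (by omega)) h2
      rw [e] at mv
      exact ⟨G, hre.trans mv, hGH, fun w hw => by
        obtain ⟨s, a, b, c, d⟩ := hGent w hw
        exact ⟨s, a, by omega, c, d⟩⟩
    · by_cases hvH : v ∈ H
      · have e : Pf (t + 1) ∪ H = Pf t ∪ H := by
          rw [hB]
          ext x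
          by_cases hx : x = v
          · subst hx
            simp [Finset.mem_union, Finset.mem_erase, hvH]
          · simp [Finset.mem_union, Finset.mem_erase, hx]
        rw [e]
        exact ⟨G, hre, hGH, fun w hw => by
          obtain ⟨s, a, b, c, d⟩ := hGent w hw
          exact ⟨s, a, by omega, c, d⟩⟩
      · by_cases hvP : v ∈ Pf t
        · have mv := reach_ghost (E := E) (n := C + H.card) (A := Pf t ∪ H) (S := S0 ∪ G) v
            (cardPH t (by omega))
          have e1 : (Pf t ∪ H).erase v = Pf (t + 1) ∪ H := by
            rw [hB]
            ext x
            by_cases hx : x = v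
            · subst hx
              simp [Finset.mem_union, Finset.mem_erase, hvH]
            · simp [Finset.mem_union, Finset.mem_erase, hx]
          have e2 : insert v (S0 ∪ G) = S0 ∪ insert v G := by
            ext x
            simp only [Finset.mem_insert, Finset.mem_union]
            tauto
          rw [e1, e2] at mv
          refine ⟨insert v G, hre.trans mv, ?_, ?_⟩
          · intro w hw
            rcases Finset.mem_insert.mp hw with rfl | hwG
            · exact hvH
            · exact hGH w hwG
          · intro w hw
            rcases Finset.mem_insert.mp hw with rfl | hwG
            · obtain ⟨s, a, b, c, d⟩ := exists_enter h0 t w hvP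
              exact ⟨s, a, by omega, c, d⟩
            · obtain ⟨s, a, b, c, d⟩ := hGent w hwG
              exact ⟨s, a, by omega, c, d⟩
        · have e : Pf (t + 1) = Pf t := by rw [hB, Finset.erase_eq_of_notMem hvP]
          rw [e]
          exact ⟨G, hre, hGH, fun w hw => by
            obtain ⟨s, a, b, c, d⟩ := hGent w hw
            exact ⟨s, a, by omega, c, d⟩⟩

end MainAux

section CleanupAux

set_option linter.unusedSectionVars false

variable {V : Type*} [DecidableEq V] {E : V → V → Prop}

theorem cleanup {Pf : ℕ → Finset V} {T C : ℕ} (h0 : Pf 0 = ∅)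
    (hstep : ∀ t, 1 ≤ t → t ≤ T → IrrevStep E (Pf (t - 1)) (Pf t))
    (hC : ∀ t, t ≤ T → (Pf t).card ≤ C) (H : Finset V) :
    ∀ μ : ℕ, ∀ S0 : Finset V, (S0.sum fun u => 3 ^ tfn Pf T u) ≤ μ →
      (∀ u ∈ S0, u ∉ H) → (∀ u ∈ S0, (entSet Pf T u).Nonempty) →
      Reach E (C + H.card) H S0 H ∅ := by
  intro μ
  induction μ using Nat.strong_induction_on with
  | _ μ ih =>
    intro S0 hsum hSH hent
    rcases S0.eq_empty_or_nonempty with rfl | hne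
    · exact Reach.rfl _ _
    · obtain ⟨u, huS⟩ := hne
      set τ := tfn Pf T u with hτdef
      obtain ⟨hτ1, hτT, hτn, hτm⟩ : τ ∈ entSet Pf T u := Nat.sInf_mem (hent u huS)
      have hstepτ : Pf τ = insert u (Pf (τ - 1)) ∧ ∀ w, E w u → w ∈ Pf (τ - 1) := by
        obtain ⟨v, hcase⟩ := hstep τ hτ1 hτT
        rcases hcase with ⟨hB, hp⟩ | hB
        · rcases Finset.mem_insert.mp (hB ▸ hτm) with rfl | h
          · exact ⟨hB, hp⟩
          · exact absurd h hτn
        · exact absurd (Finset.mem_of_mem_erase (hB ▸ hτm)) hτn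
      obtain ⟨hPfτ, hpre⟩ := hstepτ
      obtain ⟨G, hsim, hGH, hGent⟩ := simH h0 hstep hC H S0 (τ - 1) (by omega)
      have hcard1 : (Pf (τ - 1) ∪ H).card ≤ C + H.card :=
        (Finset.card_union_le _ _).trans (Nat.add_le_add_right (hC _ (by omega)) _)
      have hcard2 : (insert u (Pf (τ - 1) ∪ H)).card ≤ C + H.card := by
        have e : insert u (Pf (τ - 1) ∪ H) = Pf τ ∪ H := by
          rw [hPfτ, Finset.insert_union]
        rw [e]
        exact (Finset.card_union_le _ _).trans (Nat.add_le_add_right (hC _ hτT) _)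
      have hpre' : ∀ w, E w u → w ∈ Pf (τ - 1) ∪ H := fun w hw =>
        Finset.mem_union_left _ (hpre w hw)
      have m1 := reach_unghost (E := E) (n := C + H.card) (A := Pf (τ - 1) ∪ H)
        (S := S0 ∪ G) u hpre' hcard1 hcard2
      have m2 := reach_unpebble (E := E) (n := C + H.card)
        (A := insert u (Pf (τ - 1) ∪ H)) (S := (S0 ∪ G).erase u) u
        (fun w hw => Finset.mem_insert_of_mem (hpre' w hw)) hcard2
      have hu_not : u ∉ Pf (τ - 1) ∪ H := by
        rw [Finset.mem_union]
        rintro (h | h)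
        exacts [hτn h, hSH u huS h]
      rw [Finset.erase_insert hu_not] at m2
      have m3 := ghostAll (E := E) (n := C + H.card) (Pf (τ - 1) \ H) (Pf (τ - 1) ∪ H)
        ((S0 ∪ G).erase u) hcard1
      have e3 : (Pf (τ - 1) ∪ H) \ (Pf (τ - 1) \ H) = H := by
        ext x
        simp only [Finset.mem_sdiff, Finset.mem_union]
        tauto
      rw [e3] at m3
      set W := Pf (τ - 1) \ H with hWdef
      set S1 := ((S0 ∪ G).erase u) ∪ W with hS1def
      have hGW_ent : ∀ w, w ∈ G ∪ W → ∃ s, s ∈ entSet Pf T w ∧ s ≤ τ - 1 := by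
        intro w hw
        rcases Finset.mem_union.mp hw with hw | hw
        · obtain ⟨s, a, b, c, d⟩ := hGent w hw
          exact ⟨s, ⟨a, by omega, c, d⟩, b⟩
        · obtain ⟨s, a, b, c, d⟩ := exists_enter h0 (τ - 1) w (Finset.mem_sdiff.mp hw).1
          exact ⟨s, ⟨a, by omega, c, d⟩, b⟩
      have hS1H : ∀ x ∈ S1, x ∉ H := by
        intro x hx
        rcases Finset.mem_union.mp hx with hx | hx
        · rcases Finset.mem_union.mp (Finset.mem_of_mem_erase hx) with h | h
          exacts [hSH x h, hGH x h]
        · exact (Finset.mem_sdiff.mp hx).2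
      have hS1ent : ∀ x ∈ S1, (entSet Pf T x).Nonempty := by
        intro x hx
        rcases Finset.mem_union.mp hx with hx | hx
        · rcases Finset.mem_union.mp (Finset.mem_of_mem_erase hx) with h | h
          · exact hent x h
          · obtain ⟨s, hs, _⟩ := hGW_ent x (Finset.mem_union_left _ h)
            exact ⟨s, hs⟩
        · obtain ⟨s, hs, _⟩ := hGW_ent x (Finset.mem_union_right _ hx)
          exact ⟨s, hs⟩
      have hkey : (S1.sum fun w => 3 ^ tfn Pf T w) < μ := by
        set Y := (G ∪ W) \ (S0.erase u) with hYdef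
        have hYlt : ∀ w ∈ Y, tfn Pf T w < τ ∧ (entSet Pf T w).Nonempty := by
          intro w hw
          obtain ⟨s, hs, hsle⟩ := hGW_ent w (Finset.mem_sdiff.mp hw).1
          exact ⟨lt_of_le_of_lt (Nat.sInf_le hs) (by omega), ⟨s, hs⟩⟩
        have hsub1 : S1 ⊆ (S0.erase u) ∪ Y := by
          intro x hx
          simp only [hS1def, hYdef, Finset.mem_union, Finset.mem_erase,
            Finset.mem_sdiff] at hx ⊢
          tauto
        have hdisjY : Disjoint (S0.erase u) Y := Finset.sdiff_disjoint.symm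
        have himg : (Y.sum fun w => 3 ^ tfn Pf T w) < 3 ^ τ := by
          have hinj : ∀ x ∈ Y, ∀ y ∈ Y, tfn Pf T x = tfn Pf T y → x = y := by
            intro x hx y hy hxy
            exact tfn_inj hstep (hYlt x hx).2 (hYlt y hy).2 hxy
          have e : ((Y.image (tfn Pf T)).sum fun j => 3 ^ j)
              = Y.sum fun w => 3 ^ tfn Pf T w := Finset.sum_image hinj
          rw [← e]
          calc ((Y.image (tfn Pf T)).sum fun j => 3 ^ j)
              ≤ (Finset.range τ).sum fun j => 3 ^ j := by
                apply Finset.sum_le_sum_of_subset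
                intro j hj
                obtain ⟨w, hw, rfl⟩ := Finset.mem_image.mp hj
                exact Finset.mem_range.mpr (hYlt w hw).1
            _ < 3 ^ τ := geom3 τ
        have hsplit : (S0.sum fun w => 3 ^ tfn Pf T w)
            = ((S0.erase u).sum fun w => 3 ^ tfn Pf T w) + 3 ^ τ := by
          rw [hτdef]
          exact (Finset.sum_erase_add S0 _ huS).symm
        calc (S1.sum fun w => 3 ^ tfn Pf T w)
            ≤ (((S0.erase u) ∪ Y).sum fun w => 3 ^ tfn Pf T w) :=
              Finset.sum_le_sum_of_subset hsub1
          _ = ((S0.erase u).sum fun w => 3 ^ tfn Pf T w)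
              + (Y.sum fun w => 3 ^ tfn Pf T w) := Finset.sum_union hdisjY
          _ < ((S0.erase u).sum fun w => 3 ^ tfn Pf T w) + 3 ^ τ :=
              Nat.add_lt_add_left himg _
          _ = S0.sum fun w => 3 ^ tfn Pf T w := hsplit.symm
          _ ≤ μ := hsum
      have hrec := ih _ hkey S1 le_rfl hS1H hS1ent
      exact ((hsim.trans m1).trans m2).trans (m3.trans hrec)

theorem reach_to_spooky [Finite V] {n : ℕ}
    (h : Reach E n ∅ ∅ (rootFinset E) ∅) :
    ∃ P S : ℕ → Finset V, ∃ T : ℕ, IsSpookyStrategy E P S T ∧ pebCost P T ≤ n := by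
  obtain ⟨f, T, hf0, hfT, hstep⟩ := h
  refine ⟨fun t => (f t).1, fun t => (f t).2, T,
    ⟨by simp [hf0], by simp [hf0], by simp [hfT], by simp [hfT],
      fun t h1 h2 => (hstep t h1 h2).1⟩, ?_⟩
  unfold pebCost
  apply Finset.sup_le
  intro t ht
  have ht' : t ≤ T := by
    have := Finset.mem_range.mp ht
    omega
  rcases Nat.eq_zero_or_pos t with rfl | hpos
  · simp [hf0]
  · simpa using (hstep t hpos ht').2.2

theorem spooky_to_irrev [Finite V] {P S : ℕ → Finset V} {T : ℕ}
    (h : IsSpookyStrategy E P S T) : IsIrrevStrategy E P T := by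
  obtain ⟨h0, _, hT, _, hsub⟩ := h
  refine ⟨h0, hT, fun t h1 h2 => ?_⟩
  obtain ⟨v, hc⟩ := hsub t h1 h2
  rcases hc with ⟨hB, _, hpre⟩ | ⟨hB, _, _⟩ | ⟨hB, _⟩ | ⟨hB, _, hpre⟩
  exacts [⟨v, Or.inl ⟨hB, hpre⟩⟩, ⟨v, Or.inr hB⟩, ⟨v, Or.inr hB⟩, ⟨v, Or.inl ⟨hB, hpre⟩⟩]

theorem spooky_exists [Fintype V] (hacyc : Acyclic E) :
    ∃ P S : ℕ → Finset V, ∃ T : ℕ, IsSpookyStrategy E P S T := by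
  have hn : ∀ B : Finset V, B.card ≤ Fintype.card V := fun B =>
    le_trans (Finset.card_le_univ B) (le_of_eq Finset.card_univ)
  have up := pebbleUp (E := E) (n := Fintype.card V) hacyc hn (Finset.univ.card) Finset.univ
    le_rfl (fun v _ w _ => Finset.mem_univ w) ∅
  have down := spookyDown (E := E) (n := Fintype.card V) hacyc hn
    ((Finset.univ \ rootFinset E).card) Finset.univ le_rfl (Finset.subset_univ _)
    (fun u _ _ w _ => Finset.mem_univ w)
  obtain ⟨P, S, T, hS, _⟩ := reach_to_spooky (up.trans down)
  exact ⟨P, S, T, hS⟩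

theorem irrev_to_spooky [Fintype V] {Pf : ℕ → Finset V} {T : ℕ}
    (h : IsIrrevStrategy E Pf T) :
    ∃ P S : ℕ → Finset V, ∃ T' : ℕ, IsSpookyStrategy E P S T' ∧
      pebCost P T' ≤ pebCost Pf T + (rootFinset E).card := by
  obtain ⟨h0, hT, hstep⟩ := h
  have hC : ∀ t, t ≤ T → (Pf t).card ≤ pebCost Pf T := by
    intro t ht
    show (Pf t).card ≤ (Finset.range (T + 1)).sup fun t => (Pf t).card
    exact Finset.le_sup (f := fun t => (Pf t).card) (Finset.mem_range.mpr (by omega))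
  obtain ⟨G, hre, hdisj, hent⟩ := forwardSim h0 hstep hC T le_rfl
  have hGR : ∀ u ∈ G, u ∉ rootFinset E := by
    intro u hu
    rw [← hT]
    exact hdisj u hu
  have hGent : ∀ u ∈ G, (entSet Pf T u).Nonempty := by
    intro u hu
    obtain ⟨s, a, b, c, d⟩ := hent u hu
    exact ⟨s, a, b, c, d⟩
  have hclean := cleanup h0 hstep hC (rootFinset E)
    (G.sum fun u => 3 ^ tfn Pf T u) G le_rfl hGR hGent
  rw [hT] at hre
  have total := (hre.mono (Nat.le_add_right _ _)).trans hclean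
  exact reach_to_spooky total

end CleanupAux

/-- A finite DAG with `m` roots admits at least one irreversible and at
least one spooky pebbling strategy, and the minimal pebbling costs satisfy
`C_irr ≤ C_spooky ≤ C_irr + m`. -/
theorem min_costs_compare {V : Type*} [Fintype V] [DecidableEq V]
    (E : V → V → Prop) (hacyc : Acyclic E) :
    (∃ (Pf : ℕ → Finset V) (T : ℕ), IsIrrevStrategy E Pf T) ∧
    (∃ (Pf Sf : ℕ → Finset V) (T : ℕ), IsSpookyStrategy E Pf Sf T) ∧
    sInf {C : ℕ | ∃ (Pf : ℕ → Finset V) (T : ℕ),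
        IsIrrevStrategy E Pf T ∧ pebCost Pf T = C} ≤
      sInf {C : ℕ | ∃ (Pf Sf : ℕ → Finset V) (T : ℕ),
        IsSpookyStrategy E Pf Sf T ∧ pebCost Pf T = C} ∧
    sInf {C : ℕ | ∃ (Pf Sf : ℕ → Finset V) (T : ℕ),
        IsSpookyStrategy E Pf Sf T ∧ pebCost Pf T = C} ≤
      sInf {C : ℕ | ∃ (Pf : ℕ → Finset V) (T : ℕ),
        IsIrrevStrategy E Pf T ∧ pebCost Pf T = C} + (rootFinset E).card := by
  obtain ⟨P0, S0, T0, hS0⟩ := spooky_exists (E := E) hacyc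
  have hirr0 : IsIrrevStrategy E P0 T0 := spooky_to_irrev hS0
  refine ⟨⟨P0, T0, hirr0⟩, ⟨P0, S0, T0, hS0⟩, ?_, ?_⟩
  · have hne : {C : ℕ | ∃ (Pf Sf : ℕ → Finset V) (T : ℕ),
        IsSpookyStrategy E Pf Sf T ∧ pebCost Pf T = C}.Nonempty :=
      ⟨pebCost P0 T0, P0, S0, T0, hS0, rfl⟩
    obtain ⟨Pf, Sf, T, hsp, hc⟩ := Nat.sInf_mem hne
    exact Nat.sInf_le ⟨Pf, T, spooky_to_irrev hsp, hc⟩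
  · have hne : {C : ℕ | ∃ (Pf : ℕ → Finset V) (T : ℕ),
        IsIrrevStrategy E Pf T ∧ pebCost Pf T = C}.Nonempty :=
      ⟨pebCost P0 T0, P0, T0, hirr0, rfl⟩
    obtain ⟨Pf, T, hirr, hc⟩ := Nat.sInf_mem hne
    obtain ⟨P, S, T', hsp, hle⟩ := irrev_to_spooky hirr
    have h1 : sInf {C : ℕ | ∃ (Pf Sf : ℕ → Finset V) (T : ℕ),
        IsSpookyStrategy E Pf Sf T ∧ pebCost Pf T = C} ≤ pebCost P T' :=
      Nat.sInf_le ⟨P, S, T', hsp, rfl⟩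
    rw [← hc]
    exact h1.trans hle
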